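/- Let K be a commutative ring with derivation \partial satisfying \partial x = 1 for a fixed element x \in K, and let A, B \in K[v] be polynomials in v with coefficients in K. Then for every r \ge 0, \sum_{j\ge 0} (-1)^j \partial^j ( [v^j]( A \cdot \partial^r B ) ) = \sum_{j\ge 0} (-1)^j \partial^j ( [v^j]( B \cdot (-(\partial + v))^r A ) ), where \partial acts coefficientwise on polynomials in v and (\partial + v) denotes the operator sending a polynomial P(v) to \partial P(v) + v P(v). -/

import Mathlib

namespace ExchangeAux

variable {K : Type*} [CommRing K]

/-- Convolution coefficient: `[v^j](P·Q)`. -/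
def conv (P Q : ℕ → K) (j : ℕ) : K := ∑ k ∈ Finset.range (j+1), P k * Q (j - k)

/-- The alternating sum. -/
def S (D : K → K) (N : ℕ) (P Q : ℕ → K) : K :=
  ∑ j ∈ Finset.range N, (-1 : K)^j * D^[j] (conv P Q j)

lemma D_zero (D : K → K) (hadd : ∀ a b : K, D (a + b) = D a + D b) : D 0 = 0 := by
  have h := hadd 0 0
  rw [add_zero] at h
  have h2 : D 0 + D 0 = D 0 + 0 := by rw [add_zero]; exact h.symm
  exact (add_left_cancel h2)

lemma D_neg (D : K → K) (hadd : ∀ a b : K, D (a + b) = D a + D b) (a : K) :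
    D (-a) = -D a := by
  have h := hadd a (-a)
  rw [add_neg_cancel, D_zero D hadd] at h
  exact (eq_neg_of_add_eq_zero_right h.symm)

lemma D_sum (D : K → K) (hadd : ∀ a b : K, D (a + b) = D a + D b)
    {ι : Type*} (s : Finset ι) (f : ι → K) :
    D (∑ i ∈ s, f i) = ∑ i ∈ s, D (f i) := by
  classical
  induction s using Finset.induction_on with
  | empty => simpa using D_zero D hadd
  | insert _ _ h ih => rw [Finset.sum_insert h, Finset.sum_insert h, hadd, ih]

lemma Diter_zero (D : K → K) (hadd : ∀ a b : K, D (a + b) = D a + D b) (j : ℕ) :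
    D^[j] (0 : K) = 0 := by
  induction j with
  | zero => rfl
  | succ n ih => rw [Function.iterate_succ_apply', ih, D_zero D hadd]

lemma Diter_add (D : K → K) (hadd : ∀ a b : K, D (a + b) = D a + D b) (j : ℕ) (a b : K) :
    D^[j] (a + b) = D^[j] a + D^[j] b := by
  induction j generalizing a b with
  | zero => rfl
  | succ n ih =>
      rw [Function.iterate_succ_apply, Function.iterate_succ_apply,
        Function.iterate_succ_apply D n b, hadd, ih]

lemma Diter_neg (D : K → K) (hadd : ∀ a b : K, D (a + b) = D a + D b) (j : ℕ) (a : K) :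
    D^[j] (-a) = -D^[j] a := by
  induction j generalizing a with
  | zero => rfl
  | succ n ih =>
      rw [Function.iterate_succ_apply, Function.iterate_succ_apply, D_neg D hadd, ih]

lemma conv_comm (P Q : ℕ → K) (j : ℕ) : conv P Q j = conv Q P j := by
  unfold conv
  rw [← Finset.sum_range_reflect]
  apply Finset.sum_congr rfl
  intro k hk
  rw [Finset.mem_range] at hk
  have h1 : j + 1 - 1 - k = j - k := by omega
  have h2 : j - (j - k) = k := by omega
  rw [h1, h2, mul_comm]


lemma conv_D (D : K → K) (hadd : ∀ a b : K, D (a + b) = D a + D b)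
    (hleib : ∀ a b : K, D (a * b) = a * D b + b * D a)
    (P Q : ℕ → K) (j : ℕ) :
    D (conv P Q j) = conv P (fun m => D (Q m)) j + conv (fun k => D (P k)) Q j := by
  unfold conv
  rw [D_sum D hadd, ← Finset.sum_add_distrib]
  apply Finset.sum_congr rfl
  intro k _
  rw [hleib]
  ring

lemma conv_E (D : K → K) (E : (ℕ → K) → (ℕ → K))
    (hE : ∀ (P : ℕ → K) (m : ℕ),
      E P m = -(D (P m) + (if m = 0 then 0 else P (m - 1))))
    (P Q : ℕ → K) (j : ℕ) :
    conv (E P) Q j = -(conv (fun k => D (P k)) Q j)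
      - (if j = 0 then 0 else conv P Q (j - 1)) := by
  have hsplit : conv (E P) Q j
      = -(conv (fun k => D (P k)) Q j)
        - ∑ k ∈ Finset.range (j+1), (if k = 0 then 0 else P (k-1)) * Q (j - k) := by
    unfold conv
    rw [← Finset.sum_neg_distrib, ← Finset.sum_sub_distrib]
    apply Finset.sum_congr rfl
    intro k _
    rw [hE]
    ring
  rw [hsplit]
  congr 1
  cases j with
  | zero => simp
  | succ m =>
      rw [if_neg (Nat.succ_ne_zero m)]
      have hm : m + 1 - 1 = m := rfl
      rw [hm]
      unfold conv
      rw [Finset.sum_range_succ']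
      have h0 : (if (0:ℕ) = 0 then (0:K) else P (0-1)) * Q (m+1-0) = 0 := by simp
      rw [h0, add_zero]
      apply Finset.sum_congr rfl
      intro i _
      rw [if_neg (Nat.succ_ne_zero i)]
      simp [Nat.succ_sub_succ]

lemma conv_vanish (P Q : ℕ → K) (NP NQ j : ℕ)
    (hP : ∀ k, NP ≤ k → P k = 0) (hQ : ∀ k, NQ ≤ k → Q k = 0)
    (hj : NP + NQ ≤ j + 1) : conv P Q j = 0 := by
  unfold conv
  apply Finset.sum_eq_zero
  intro k hk
  rw [Finset.mem_range] at hk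
  by_cases h : NP ≤ k
  · rw [hP k h, zero_mul]
  · have : NQ ≤ j - k := by omega
    rw [hQ _ this, mul_zero]

lemma single_step (D : K → K) (hadd : ∀ a b : K, D (a + b) = D a + D b)
    (hleib : ∀ a b : K, D (a * b) = a * D b + b * D a)
    (E : (ℕ → K) → (ℕ → K))
    (hE : ∀ (P : ℕ → K) (m : ℕ),
      E P m = -(D (P m) + (if m = 0 then 0 else P (m - 1))))
    (P Q : ℕ → K) (N NP NQ : ℕ)
    (hP : ∀ k, NP ≤ k → P k = 0) (hQ : ∀ k, NQ ≤ k → Q k = 0)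
    (hN : NP + NQ ≤ N) :
    S D N P (fun m => D (Q m)) = S D N (E P) Q := by
  cases N with
  | zero => simp [S]
  | succ M =>
    set g : ℕ → K := fun j => if j = 0 then 0 else conv P Q (j - 1) with hg
    have key : ∀ j, conv P (fun m => D (Q m)) j
        = conv (E P) Q j + (D (conv P Q j) + g j) := by
      intro j
      rw [conv_E D E hE]
      simp only [hg]
      have h := conv_D D hadd hleib P Q j
      linear_combination -h
    have hc0 : conv P Q M = 0 := conv_vanish P Q NP NQ M hP hQ (by omega)
    have step1 : S D (M+1) P (fun m => D (Q m))
        = S D (M+1) (E P) Q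
          + ∑ j ∈ Finset.range (M+1),
              ((-1 : K)^j * D^[j+1] (conv P Q j) + (-1 : K)^j * D^[j] (g j)) := by
      unfold S
      rw [← Finset.sum_add_distrib]
      apply Finset.sum_congr rfl
      intro j _
      rw [key j, Diter_add D hadd, Diter_add D hadd,
        ← Function.iterate_succ_apply D j]
      ring
    rw [step1]
    have hA1 : ∑ j ∈ Finset.range (M+1), (-1 : K)^j * D^[j+1] (conv P Q j)
        = ∑ j ∈ Finset.range M, (-1 : K)^j * D^[j+1] (conv P Q j) := by
      rw [Finset.sum_range_succ, hc0, Diter_zero D hadd, mul_zero, add_zero]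
    have hA2 : ∑ j ∈ Finset.range (M+1), (-1 : K)^j * D^[j] (g j)
        = -∑ j ∈ Finset.range M, (-1 : K)^j * D^[j+1] (conv P Q j) := by
      rw [Finset.sum_range_succ', ← Finset.sum_neg_distrib]
      have h0 : (-1 : K)^0 * D^[0] (g 0) = 0 := by simp [hg]
      rw [h0, add_zero]
      apply Finset.sum_congr rfl
      intro i _
      have : g (i+1) = conv P Q i := by simp [hg]
      rw [this]
      ring
    rw [Finset.sum_add_distrib, hA1, hA2]
    ring

lemma claim (D : K → K) (hadd : ∀ a b : K, D (a + b) = D a + D b)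
    (hleib : ∀ a b : K, D (a * b) = a * D b + b * D a)
    (E : (ℕ → K) → (ℕ → K))
    (hE : ∀ (P : ℕ → K) (m : ℕ),
      E P m = -(D (P m) + (if m = 0 then 0 else P (m - 1))))
    (Q : ℕ → K) (NQ : ℕ) (hQ : ∀ k, NQ ≤ k → Q k = 0)
    (r : ℕ) :
    ∀ (N : ℕ) (P : ℕ → K) (NP : ℕ), (∀ k, NP ≤ k → P k = 0) → NP + NQ + r ≤ N →
      S D N P (fun m => D^[r] (Q m)) = S D N (E^[r] P) Q := by
  induction r with
  | zero => intro N P NP _ _; rfl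
  | succ r ih =>
    intro N P NP hP hN
    have hQ' : ∀ k, NQ ≤ k → D^[r] (Q k) = 0 := fun k hk => by
      rw [hQ k hk, Diter_zero D hadd]
    have hEP : ∀ k, NP + 1 ≤ k → E P k = 0 := by
      intro k hk
      rw [hE, hP k (by omega), D_zero D hadd, if_neg (by omega : ¬ k = 0),
        hP (k-1) (by omega)]
      simp
    calc S D N P (fun m => D^[r+1] (Q m))
        = S D N P (fun m => D (D^[r] (Q m))) := by
          simp only [Function.iterate_succ_apply']
      _ = S D N (E P) (fun m => D^[r] (Q m)) :=
          single_step D hadd hleib E hE P (fun m => D^[r] (Q m)) N NP NQ hP hQ' (by omega)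
      _ = S D N (E^[r] (E P)) Q := ih N (E P) (NP+1) hEP (by omega)
      _ = S D N (E^[r+1] P) Q := by rw [Function.iterate_succ_apply]

end ExchangeAux

/-- Key exchange lemma (Equation id-xy-sympl2 of the paper, with `∂x = 1`):
for every `r ≥ 0`,
`∑_j (-1)^j ∂^j [v^j](A ∂^r B) = ∑_j (-1)^j ∂^j [v^j](B (-(∂+v))^r A)`,
where `A, B` are polynomials in `v` with coefficients in `K` (encoded by
coefficient sequences vanishing beyond `NA`, `NB`), `∂` acts coefficientwise,
and `(∂ + v)` sends `P(v)` to `∂P(v) + v P(v)`. -/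
theorem exchange_lemma_pow {K : Type*} [CommRing K] (D : K → K)
    (hadd : ∀ a b : K, D (a + b) = D a + D b)
    (hleib : ∀ a b : K, D (a * b) = a * D b + b * D a)
    (x : K) (hx : D x = 1)
    (A B : ℕ → K) (NA NB : ℕ)
    (hA : ∀ k, NA ≤ k → A k = 0) (hB : ∀ k, NB ≤ k → B k = 0)
    (E : (ℕ → K) → (ℕ → K))
    (hE : ∀ (P : ℕ → K) (m : ℕ),
      E P m = -(D (P m) + (if m = 0 then 0 else P (m - 1))))
    (r : ℕ) :
    ∑ j ∈ Finset.range (NA + NB + r + 2),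
      (-1 : K) ^ j * D^[j] (∑ k ∈ Finset.range (j + 1), A k * D^[r] (B (j - k)))
    = ∑ j ∈ Finset.range (NA + NB + r + 2),
      (-1 : K) ^ j * D^[j] (∑ k ∈ Finset.range (j + 1), B k * (E^[r] A) (j - k)) := by
  have h := ExchangeAux.claim D hadd hleib E hE B NB hB r (NA + NB + r + 2) A NA hA (by omega)
  have h2 : ExchangeAux.S D (NA + NB + r + 2) (E^[r] A) B
      = ExchangeAux.S D (NA + NB + r + 2) B (E^[r] A) := by
    unfold ExchangeAux.S
    exact Finset.sum_congr rfl fun j _ => by rw [ExchangeAux.conv_comm]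
  have h3 := h.trans h2
  simpa only [ExchangeAux.S, ExchangeAux.conv] using h3
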